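/- In a tree concept hierarchy with maximum level L, the time-indexed support sets at level ℓ stabilize by time 2L − ℓ: supp_{r,f}(B,ℓ,*) = supp_{r,f}(B,ℓ,2L−ℓ). In particular, every supported concept is supported within time 2L. -/
import Mathlib


open scoped Classical
noncomputable section

/-- A concept hierarchy: concepts at levels `0..L`, each concept at level `≥ 1`
has exactly `k` children one level below, level-0 concepts have no children,
there are exactly `k` top-level concepts, and every non-top concept has a parent. -/
structure ConceptHierarchy (α : Type) [DecidableEq α] where
  L : ℕ
  k : ℕ
  concepts : Finset α
  level : α → ℕ
  children : α → Finset α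
  level_le : ∀ c ∈ concepts, level c ≤ L
  children_mem : ∀ c ∈ concepts, ∀ c' ∈ children c, c' ∈ concepts
  children_level : ∀ c ∈ concepts, ∀ c' ∈ children c, level c' + 1 = level c
  children_card : ∀ c ∈ concepts, 1 ≤ level c → (children c).card = k
  children_leaf : ∀ c ∈ concepts, level c = 0 → children c = ∅
  top_card : (concepts.filter (fun c => level c = L)).card = k
  has_parent : ∀ c ∈ concepts, level c < L → ∃ c' ∈ concepts, c ∈ children c'

namespace ConceptHierarchy

variable {α : Type} [DecidableEq α]

/-- The parents of a concept. -/
def parents (H : ConceptHierarchy α) (c : α) : Finset α :=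
  H.concepts.filter (fun c' => c ∈ H.children c')

/-- Limited overlap: each concept at level `≥ 1` shares at most `o·k` children
with the union of the other concepts at the same level. -/
def LimitedOverlap (H : ConceptHierarchy α) (o : ℝ) : Prop :=
  ∀ c ∈ H.concepts, 1 ≤ H.level c →
    (((H.children c).filter (fun d => ∃ c' ∈ H.concepts, c' ≠ c ∧
        H.level c' = H.level c ∧ d ∈ H.children c')).card : ℝ) ≤ o * H.k

/-- Tree hierarchy: no overlap among child sets of distinct same-level concepts. -/
def IsTree (H : ConceptHierarchy α) : Prop :=
  ∀ c ∈ H.concepts, ∀ c' ∈ H.concepts, H.level c = H.level c' → c ≠ c' →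
    Disjoint (H.children c) (H.children c')

/-- Descendant relation: reflexive-transitive closure of the children relation. -/
inductive Desc (H : ConceptHierarchy α) : α → α → Prop
  | refl (c : α) : Desc H c c
  | step {c d e : α} : d ∈ H.children c → Desc H d e → Desc H c e

/-- The level-0 descendants of a concept. -/
def leaves (H : ConceptHierarchy α) (c : α) : Finset α :=
  H.concepts.filter (fun d => H.Desc c d ∧ H.level d = 0)

/-- Level-indexed bottom-up support sets: `S(0) = B ∩ C₀`,
`S(ℓ) = {c at level ℓ : |children(c) ∩ S(ℓ-1)| ≥ r·k}`. -/
def suppL (H : ConceptHierarchy α) (r : ℝ) (B : Finset α) : ℕ → Finset α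
  | 0 => B ∩ H.concepts.filter (fun c => H.level c = 0)
  | (ℓ+1) => H.concepts.filter (fun c => H.level c = ℓ + 1 ∧
      r * H.k ≤ ((H.children c ∩ suppL H r B ℓ).card : ℝ))

/-- `supp_r(B) = ⋃_ℓ S(ℓ)`. -/
def supp (H : ConceptHierarchy α) (r : ℝ) (B : Finset α) : Set α :=
  ⋃ ℓ, ↑(H.suppL r B ℓ)

/-- Time-and-level-indexed support sets with feedback strength `f`:
`S(0,t) = B`; `S(ℓ,0) = ∅` for `ℓ ≥ 1`; and
`S(ℓ,t) = S(ℓ,t-1) ∪ {c at level ℓ : |children(c) ∩ S(ℓ-1,t-1)| + f·|parents(c) ∩ S(ℓ+1,t-1)| ≥ r·k}`. -/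
def suppFB (H : ConceptHierarchy α) (r f : ℝ) (B : Finset α) : ℕ → ℕ → Finset α
  | 0, _ => B
  | (_+1), 0 => ∅
  | (ℓ+1), (t+1) => suppFB H r f B (ℓ+1) t ∪
      H.concepts.filter (fun c => H.level c = ℓ + 1 ∧
        r * H.k ≤ ((H.children c ∩ suppFB H r f B ℓ t).card : ℝ) +
          f * ((H.parents c ∩ suppFB H r f B (ℓ+2) t).card : ℝ))
  termination_by ℓ t => t

/-- `supp_{r,f}(B,*,t) = ⋃_ℓ S(ℓ,t)`. -/
def suppFBatTime (H : ConceptHierarchy α) (r f : ℝ) (B : Finset α) (t : ℕ) : Set α :=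
  ⋃ ℓ, ↑(H.suppFB r f B ℓ t)

/-- `supp_{r,f}(B) = ⋃_{ℓ,t} S(ℓ,t)`. -/
def suppFBSet (H : ConceptHierarchy α) (r f : ℝ) (B : Finset α) : Set α :=
  ⋃ t, H.suppFBatTime r f B t

end ConceptHierarchy

/-- Feed-forward 0/1 weights: weight 1 from the rep of a child to the rep of its
parent, weight 0 otherwise. -/
def ffWeight {α ν : Type} [DecidableEq α] (H : ConceptHierarchy α) (rep : α → ν)
    (u v : ν) : ℝ :=
  if ∃ c ∈ H.concepts, ∃ c' ∈ H.children c, u = rep c' ∧ v = rep c then 1 else 0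

/-- Feedback-network weights: weight 1 upward (rep of child to rep of parent),
weight `f` downward (rep of parent to rep of child), 0 otherwise. -/
def fbWeight {α ν : Type} [DecidableEq α] (H : ConceptHierarchy α) (rep : α → ν)
    (f : ℝ) (u v : ν) : ℝ :=
  if ∃ c ∈ H.concepts, ∃ c' ∈ H.children c, u = rep c' ∧ v = rep c then 1
  else if ∃ c ∈ H.concepts, ∃ c' ∈ H.children c, u = rep c ∧ v = rep c' then f
  else 0

namespace ConceptHierarchy

variable {α : Type} [DecidableEq α] (H : ConceptHierarchy α) (r f : ℝ) (B : Finset α)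

lemma suppFB_zero (t : ℕ) : H.suppFB r f B 0 t = B := by
  cases t <;> rw [suppFB]

lemma suppFB_succ (ℓ t : ℕ) :
    H.suppFB r f B (ℓ+1) (t+1) = H.suppFB r f B (ℓ+1) t ∪
      H.concepts.filter (fun c => H.level c = ℓ + 1 ∧
        r * H.k ≤ ((H.children c ∩ H.suppFB r f B ℓ t).card : ℝ) +
          f * ((H.parents c ∩ H.suppFB r f B (ℓ+2) t).card : ℝ)) := by
  rw [suppFB]

lemma suppFB_start (ℓ : ℕ) : H.suppFB r f B (ℓ+1) 0 = ∅ := by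
  rw [suppFB]

lemma suppFB_mono_step (ℓ t : ℕ) :
    H.suppFB r f B ℓ t ⊆ H.suppFB r f B ℓ (t+1) := by
  cases ℓ with
  | zero => rw [suppFB_zero, suppFB_zero]
  | succ m => rw [suppFB_succ]; exact Finset.subset_union_left

lemma suppFB_mono {t t' : ℕ} (h : t ≤ t') (ℓ : ℕ) :
    H.suppFB r f B ℓ t ⊆ H.suppFB r f B ℓ t' := by
  induction t', h using Nat.le_induction with
  | base => exact Finset.Subset.rfl
  | succ t' _ ih => exact ih.trans (H.suppFB_mono_step r f B ℓ t')

lemma mem_suppFB {ℓ t : ℕ} {c : α} (hc : c ∈ H.suppFB r f B (ℓ+1) t) :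
    c ∈ H.concepts ∧ H.level c = ℓ + 1 := by
  induction t with
  | zero => rw [suppFB_start] at hc; exact absurd hc (Finset.notMem_empty c)
  | succ t ih =>
    rw [suppFB_succ] at hc
    rcases Finset.mem_union.mp hc with h | h
    · exact ih h
    · have := Finset.mem_filter.mp h
      exact ⟨this.1, this.2.1⟩

lemma suppFB_high (ℓ t : ℕ) (hℓ : H.L < ℓ + 1) : H.suppFB r f B (ℓ+1) t = ∅ := by
  ext c
  simp only [Finset.notMem_empty, iff_false]
  intro hc
  obtain ⟨h1, h2⟩ := H.mem_suppFB r f B hc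
  have := H.level_le c h1
  omega

lemma parents_subset (hTree : H.IsTree) {c d : α} (hc : c ∈ H.concepts)
    (hd : d ∈ H.children c) : H.parents d ⊆ {c} := by
  intro c' hc'
  rw [Finset.mem_singleton]
  rw [parents, Finset.mem_filter] at hc'
  obtain ⟨h1, h2⟩ := hc'
  by_contra hne
  have hl1 := H.children_level c hc d hd
  have hl2 := H.children_level c' h1 d h2
  have hlev : H.level c = H.level c' := by omega
  exact Finset.disjoint_left.mp (hTree c hc c' h1 hlev (fun h => hne (h ▸ rfl))) hd h2

lemma suppL_subset (hf : 0 ≤ f) :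
    ∀ ℓ t, ℓ ≤ t → H.suppL r B ℓ ⊆ H.suppFB r f B ℓ t := by
  intro ℓ
  induction ℓ with
  | zero =>
    intro t _
    rw [suppFB_zero]
    exact fun c hc => (Finset.mem_inter.mp hc).1
  | succ ℓ ih =>
    intro t ht
    obtain ⟨s, rfl⟩ : ∃ s, t = s + 1 := ⟨t - 1, by omega⟩
    intro c hc
    rw [suppL, Finset.mem_filter] at hc
    obtain ⟨hcm, hlev, hcard⟩ := hc
    rw [suppFB_succ]
    apply Finset.mem_union_right
    rw [Finset.mem_filter]
    refine ⟨hcm, hlev, ?_⟩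
    have h1 : ((H.children c ∩ H.suppL r B ℓ).card : ℝ) ≤
        ((H.children c ∩ H.suppFB r f B ℓ s).card : ℝ) := by
      exact_mod_cast Finset.card_le_card
        (Finset.inter_subset_inter Finset.Subset.rfl (ih s (by omega)))
    have h2 : (0:ℝ) ≤ f * ((H.parents c ∩ H.suppFB r f B (ℓ+2) s).card : ℝ) := by
      positivity
    linarith

lemma key (hTree : H.IsTree) : ∀ t ℓ (c : α), c ∈ H.suppFB r f B (ℓ+1) t →
    H.parents c ∩ H.suppFB r f B (ℓ+2) t = ∅ → c ∈ H.suppL r B (ℓ+1) := by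
  intro t
  induction t with
  | zero =>
    intro ℓ c hc _
    rw [suppFB_start] at hc
    exact absurd hc (Finset.notMem_empty c)
  | succ t ih =>
    intro ℓ c hc hpar
    have hparT : H.parents c ∩ H.suppFB r f B (ℓ+2) t = ∅ := by
      rw [← Finset.subset_empty] at hpar ⊢
      exact (Finset.inter_subset_inter Finset.Subset.rfl
        (H.suppFB_mono_step r f B (ℓ+2) t)).trans hpar
    by_cases hct : c ∈ H.suppFB r f B (ℓ+1) t
    · exact ih ℓ c hct hparT
    · rw [suppFB_succ] at hc
      rcases Finset.mem_union.mp hc with h | h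
      · exact absurd h hct
      rw [Finset.mem_filter] at h
      obtain ⟨hcm, hlev, hineq⟩ := h
      rw [hparT] at hineq
      simp only [Finset.card_empty, Nat.cast_zero, mul_zero, add_zero] at hineq
      have hsub : H.children c ∩ H.suppFB r f B ℓ t ⊆ H.children c ∩ H.suppL r B ℓ := by
        intro d hd
        obtain ⟨hd1, hd2⟩ := Finset.mem_inter.mp hd
        refine Finset.mem_inter.mpr ⟨hd1, ?_⟩
        cases ℓ with
        | zero =>
          rw [suppFB_zero] at hd2
          rw [suppL]
          refine Finset.mem_inter.mpr ⟨hd2, Finset.mem_filter.mpr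
            ⟨H.children_mem c hcm d hd1, ?_⟩⟩
          have := H.children_level c hcm d hd1
          omega
        | succ m =>
          apply ih m d hd2
          rw [← Finset.subset_empty]
          intro x hx
          obtain ⟨hx1, hx2⟩ := Finset.mem_inter.mp hx
          have hxc : x = c :=
            Finset.mem_singleton.mp (H.parents_subset hTree hcm hd1 hx1)
          exact absurd (hxc ▸ hx2) hct
      rw [suppL, Finset.mem_filter]
      refine ⟨hcm, hlev, ?_⟩
      exact hineq.trans (by exact_mod_cast Finset.card_le_card hsub)

lemma stab (hTree : H.IsTree) (hf : 0 ≤ f) : ∀ j ℓ, H.L = ℓ + j → 1 ≤ ℓ → ∀ t,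
    H.suppFB r f B ℓ t ⊆ H.suppFB r f B ℓ (2 * H.L - ℓ) := by
  intro j
  induction j with
  | zero =>
    intro ℓ hL hℓ t
    obtain ⟨m, rfl⟩ : ∃ m, ℓ = m + 1 := ⟨ℓ - 1, by omega⟩
    intro c hc
    have hpar : H.parents c ∩ H.suppFB r f B (m+2) t = ∅ := by
      rw [H.suppFB_high r f B (m+1) t (by omega), Finset.inter_empty]
    have hL2 : 2 * H.L - (m+1) = m + 1 := by omega
    rw [hL2]
    exact H.suppL_subset r f B hf (m+1) (m+1) le_rfl (H.key r f B hTree t m c hc hpar)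
  | succ j ihj =>
    intro ℓ hL hℓ t
    obtain ⟨m, rfl⟩ : ∃ m, ℓ = m + 1 := ⟨ℓ - 1, by omega⟩
    induction t with
    | zero => rw [suppFB_start]; exact Finset.empty_subset _
    | succ t iht =>
      intro c hc
      rw [suppFB_succ] at hc
      rcases Finset.mem_union.mp hc with h | h
      · exact iht h
      by_cases hct : c ∈ H.suppFB r f B (m+1) t
      · exact iht hct
      rw [Finset.mem_filter] at h
      obtain ⟨hcm, hlev, hineq⟩ := h
      have htime : 2 * H.L - (m+1) = (2 * H.L - (m+2)) + 1 := by omega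
      rw [htime, suppFB_succ]
      apply Finset.mem_union_right
      rw [Finset.mem_filter]
      refine ⟨hcm, hlev, ?_⟩
      have hch : H.children c ∩ H.suppFB r f B m t ⊆
          H.children c ∩ H.suppFB r f B m (2 * H.L - (m+2)) := by
        cases m with
        | zero => rw [suppFB_zero, suppFB_zero]
        | succ n =>
          intro d hd
          obtain ⟨hd1, hd2⟩ := Finset.mem_inter.mp hd
          refine Finset.mem_inter.mpr ⟨hd1, ?_⟩
          have hdpar : H.parents d ∩ H.suppFB r f B (n+2) t = ∅ := by
            rw [← Finset.subset_empty]
            intro x hx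
            obtain ⟨hx1, hx2⟩ := Finset.mem_inter.mp hx
            have hxc : x = c :=
              Finset.mem_singleton.mp (H.parents_subset hTree hcm hd1 hx1)
            exact absurd (hxc ▸ hx2) hct
          have hdL := H.key r f B hTree t n d hd2 hdpar
          exact H.suppL_subset r f B hf (n+1) (2 * H.L - (n+3)) (by omega) hdL
      have hpr : H.parents c ∩ H.suppFB r f B (m+2) t ⊆
          H.parents c ∩ H.suppFB r f B (m+2) (2 * H.L - (m+2)) := by
        refine Finset.inter_subset_inter Finset.Subset.rfl ?_
        have := ihj (m+2) (by omega) (by omega) t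
        have h2 : 2 * H.L - (m+2) = 2 * H.L - (m+2) := rfl
        exact this
      have h1 : ((H.children c ∩ H.suppFB r f B m t).card : ℝ) ≤
          ((H.children c ∩ H.suppFB r f B m (2 * H.L - (m+2))).card : ℝ) := by
        exact_mod_cast Finset.card_le_card hch
      have h2 : ((H.parents c ∩ H.suppFB r f B (m+2) t).card : ℝ) ≤
          ((H.parents c ∩ H.suppFB r f B (m+2) (2 * H.L - (m+2))).card : ℝ) := by
        exact_mod_cast Finset.card_le_card hpr
      nlinarith [mul_le_mul_of_nonneg_left h2 hf]

lemma main_stab (hTree : H.IsTree) (hf : 0 ≤ f) (ℓ t : ℕ) :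
    H.suppFB r f B ℓ t ⊆ H.suppFB r f B ℓ (2 * H.L - ℓ) := by
  cases ℓ with
  | zero => rw [suppFB_zero, suppFB_zero]
  | succ m =>
    by_cases hle : m + 1 ≤ H.L
    · exact H.stab r f B hTree hf (H.L - (m+1)) (m+1) (by omega) (by omega) t
    · rw [H.suppFB_high r f B m t (by omega)]
      exact Finset.empty_subset _

end ConceptHierarchy

/-- in a tree hierarchy with maximum level `L`, the time-indexed
support sets at level `ℓ` stabilize by time `2L − ℓ`; in particular every
supported concept is supported within time `2L`. -/
theorem tree_stabilize {α : Type} [DecidableEq α] (H : ConceptHierarchy α)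
    (hTree : H.IsTree) (r f : ℝ) (hr0 : 0 ≤ r) (hr1 : r ≤ 1) (hf : 0 ≤ f)
    (B : Finset α) (hB : ∀ b ∈ B, H.level b = 0) :
    (∀ ℓ : ℕ, (⋃ t : ℕ, (↑(H.suppFB r f B ℓ t) : Set α)) =
        ↑(H.suppFB r f B ℓ (2 * H.L - ℓ))) ∧
    H.suppFBSet r f B = H.suppFBatTime r f B (2 * H.L) := by
  have main := fun ℓ t => H.main_stab r f B hTree hf ℓ t
  constructor
  · intro ℓ
    apply Set.Subset.antisymm
    · exact Set.iUnion_subset fun t => Finset.coe_subset.mpr (main ℓ t)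
    · exact Set.subset_iUnion (fun t => (↑(H.suppFB r f B ℓ t) : Set α)) (2 * H.L - ℓ)
  · apply Set.Subset.antisymm
    · apply Set.iUnion_subset
      intro t
      apply Set.iUnion_subset
      intro ℓ
      refine Set.subset_iUnion_of_subset ℓ ?_
      refine Finset.coe_subset.mpr ((main ℓ t).trans ?_)
      exact H.suppFB_mono r f B (by omega) ℓ
    · exact Set.subset_iUnion (fun t => H.suppFBatTime r f B t) (2 * H.L)
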